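/- Let (X_1,W_1),...,(X_n,W_n) be independent copies of a random vector (X,W) with joint probability density f_{X,W}, where X is a nonnegative continuous random variable. Let φ: [0,∞) → (0,1] be a continuous decreasing function with φ(0) = 1 and lim_{t→∞} φ(t) = 0, and define the time-dependent powers W_i(t) = W_i·φ(t). Fix 1 ≤ r ≤ n. Then for all t ≥ 0 and s ≥ 0, the joint survival function Q(t,s) = P{X_{r:n} > t, W_{[r:n]}(t) > s, W_{[r+1:n]}(t) > s, ..., W_{[n:n]}(t) > s} satisfies Q(t,s) = P{X_{r:n} > t, W_{[r:n]} > s/φ(t), ..., W_{[n:n]} > s/φ(t)} = n·C(n-1,r-1) · ∫_{s/φ(t)}^∞ ∫_t^∞ F_X(x)^{r-1} · [F̄_{X,W}(x, s/φ(t))]^{n-r} · f_{X,W}(x,y) dx dy. -/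

import Mathlib

open MeasureTheory ProbabilityTheory

open Classical in
/-- The `r`-th order statistic (r = 1, ..., n) of the values `v 0, ..., v (n-1)`:
the smallest `x` such that at least `r` of the values are `≤ x`. -/
noncomputable def orderStat {n : ℕ} (v : Fin n → ℝ) (r : ℕ) : ℝ :=
  sInf {x : ℝ | r ≤ (Finset.univ.filter (fun i => v i ≤ x)).card}

open Finset

open Classical in
lemma orderStat_eq {N : ℕ} (a : Fin N → ℝ) (r : ℕ) (i : Fin N) (hr : 1 ≤ r)
    (h1 : (univ.filter (fun j => a j ≤ a i)).card = r)
    (h2 : (univ.filter (fun j => a j < a i)).card = r - 1) :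
    orderStat a r = a i := by
  have hmem : a i ∈ {x : ℝ | r ≤ (univ.filter (fun j => a j ≤ x)).card} := by
    simp [Set.mem_setOf_eq, h1]
  have hlb : ∀ x ∈ {x : ℝ | r ≤ (univ.filter (fun j => a j ≤ x)).card}, a i ≤ x := by
    intro x hx
    by_contra hlt
    push_neg at hlt
    have hsub : (univ.filter (fun j => a j ≤ x)) ⊆ (univ.filter (fun j => a j < a i)) := by
      intro j hj
      simp only [mem_filter, mem_univ, true_and] at hj ⊢
      exact lt_of_le_of_lt hj hlt
    have h3 := Finset.card_le_card hsub
    rw [h2] at h3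
    simp only [Set.mem_setOf_eq] at hx
    omega
  exact le_antisymm (csInf_le ⟨a i, hlb⟩ hmem) (le_csInf ⟨a i, hmem⟩ hlb)

open Classical in
lemma rank_surj {N : ℕ} (a : Fin N → ℝ) (ha : Function.Injective a) (k : ℕ) (hk : k < N) :
    ∃ i, (univ.filter (fun j => a j < a i)).card = k := by
  classical
  set ρ : Fin N → Fin N := fun i => ⟨(univ.filter (fun j => a j < a i)).card, by
    have : (univ.filter (fun j => a j < a i)) ⊆ univ.erase i := by
      intro j hj
      simp only [mem_filter, mem_univ, true_and] at hj
      refine Finset.mem_erase.2 ⟨fun h => by simp [h] at hj, Finset.mem_univ _⟩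
    calc (univ.filter (fun j => a j < a i)).card ≤ (univ.erase i).card := Finset.card_le_card this
      _ < N := by rw [Finset.card_erase_of_mem (Finset.mem_univ i)]; simp [Fin.pos_iff_nonempty]; exact Fin.pos_iff_nonempty.1 i.pos⟩ with hρ
  have hinj : Function.Injective ρ := by
    intro i i' h
    by_contra hne
    have hval : (univ.filter (fun j => a j < a i)).card = (univ.filter (fun j => a j < a i')).card := by
      simpa [hρ, Fin.ext_iff] using h
    have key : ∀ p q : Fin N, p ≠ q → a p < a q →
        (univ.filter (fun j => a j < a p)).card < (univ.filter (fun j => a j < a q)).card := by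
      intro p q hpq hlt
      have hsub : insert p (univ.filter (fun j => a j < a p)) ⊆ univ.filter (fun j => a j < a q) := by
        intro j hj
        rcases Finset.mem_insert.1 hj with rfl | hj
        · simp [hlt]
        · simp only [mem_filter, mem_univ, true_and] at hj ⊢
          exact hj.trans hlt
      have hcard := Finset.card_le_card hsub
      rwa [Finset.card_insert_of_notMem (by simp)] at hcard
    rcases lt_or_gt_of_ne (fun h' => hne (ha h')) with hlt | hlt
    · have := key i i' hne hlt; omega
    · have := key i' i (Ne.symm hne) hlt; omega
  have hsurj := Finite.surjective_of_injective hinj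
  obtain ⟨i, hi⟩ := hsurj ⟨k, hk⟩
  exact ⟨i, by simpa [hρ, Fin.ext_iff] using congrArg Fin.val hi⟩


def evSet (t c : ℝ) {N : ℕ} (i : Fin N) (S : Finset (Fin N)) : Set (Fin N → ℝ × ℝ) :=
  {v | (t < (v i).1 ∧ c < (v i).2) ∧ (∀ j ∈ S, (v j).1 < (v i).1) ∧
    ∀ j, j ≠ i → j ∉ S → ((v i).1 < (v j).1 ∧ c < (v j).2)}

open Classical in
lemma evSet_filter_eq {t c : ℝ} {N : ℕ} {i : Fin N} {S : Finset (Fin N)} (hiS : i ∉ S)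
    {v : Fin N → ℝ × ℝ} (hv : v ∈ evSet t c i S) :
    univ.filter (fun j => (v j).1 < (v i).1) = S := by
  obtain ⟨-, h2, h3⟩ := hv
  ext j
  simp only [mem_filter, mem_univ, true_and]
  constructor
  · intro hj
    by_contra hjS
    rcases eq_or_ne j i with rfl | hne
    · exact lt_irrefl _ hj
    · exact absurd ((h3 j hne hjS).1) (not_lt.2 hj.le)
  · intro hj
    exact h2 j hj

open Classical in
lemma evSet_filter_le_eq {t c : ℝ} {N : ℕ} {i : Fin N} {S : Finset (Fin N)} (hiS : i ∉ S)
    {v : Fin N → ℝ × ℝ} (hv : v ∈ evSet t c i S) :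
    univ.filter (fun j => (v j).1 ≤ (v i).1) = insert i S := by
  obtain ⟨-, h2, h3⟩ := hv
  ext j
  simp only [mem_filter, mem_univ, true_and, Finset.mem_insert]
  constructor
  · intro hj
    rcases eq_or_ne j i with rfl | hne
    · exact Or.inl rfl
    · by_contra hc
      push_neg at hc
      exact absurd ((h3 j hne hc.2).1) (not_lt.2 hj)
  · rintro (rfl | hj)
    · exact le_rfl
    · exact (h2 j hj).le

lemma evSet_orderStat {t c : ℝ} {N r : ℕ} (hr : 1 ≤ r) {i : Fin N} {S : Finset (Fin N)}
    (hiS : i ∉ S) (hcard : S.card = r - 1)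
    {v : Fin N → ℝ × ℝ} (hv : v ∈ evSet t c i S) :
    orderStat (fun j => (v j).1) r = (v i).1 := by
  classical
  refine orderStat_eq _ r i hr ?_ ?_
  · rw [show (univ.filter (fun j => (v j).1 ≤ (v i).1)) = insert i S from evSet_filter_le_eq hiS hv,
      Finset.card_insert_of_notMem hiS, hcard]
    omega
  · rw [show (univ.filter (fun j => (v j).1 < (v i).1)) = S from evSet_filter_eq hiS hv, hcard]

lemma evSet_subset {t c : ℝ} {N r : ℕ} (hr : 1 ≤ r) {i : Fin N} {S : Finset (Fin N)}
    (hiS : i ∉ S) (hcard : S.card = r - 1) :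
    evSet t c i S ⊆ {v : Fin N → ℝ × ℝ | t < orderStat (fun j => (v j).1) r ∧
      ∀ j, orderStat (fun k => (v k).1) r ≤ (v j).1 → c < (v j).2} := by
  intro v hv
  have hord := evSet_orderStat hr hiS hcard hv
  obtain ⟨⟨h1, h2⟩, h3, h4⟩ := hv
  refine ⟨by rw [hord]; exact h1, fun j hj => ?_⟩
  rw [hord] at hj
  rcases eq_or_ne j i with rfl | hne
  · exact h2
  · by_cases hjS : j ∈ S
    · exact absurd hj (not_le.2 (h3 j hjS))
    · exact (h4 j hne hjS).2

open Classical in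
lemma evSet_disjoint {t c : ℝ} {N r : ℕ} (hr : 1 ≤ r) {i i' : Fin N} {S S' : Finset (Fin N)}
    (hiS : i ∉ S) (hcard : S.card = r - 1) (hiS' : i' ∉ S') (hcard' : S'.card = r - 1)
    (hne : (i, S) ≠ (i', S')) :
    Disjoint (evSet t c i S) (evSet t c i' S') := by
  rw [Set.disjoint_left]
  intro v hv hv'
  have hf := evSet_filter_eq hiS hv
  have hf' := evSet_filter_eq hiS' hv'
  have hii : i = i' := by
    by_contra hii
    -- one of (v i).1 < (v i').1 or converse (they can't be equal)
    have key : ∀ (p q : Fin N) (Sp Sq : Finset (Fin N)), p ∉ Sp → Sp.card = r - 1 →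
        q ∉ Sq → Sq.card = r - 1 → v ∈ evSet t c p Sp → v ∈ evSet t c q Sq →
        (v p).1 < (v q).1 → False := by
      intro p q Sp Sq hp hcp hq hcq hvp hvq hlt
      have h1 := evSet_filter_le_eq hp hvp
      have h2 := evSet_filter_eq hq hvq
      have hsub : univ.filter (fun j => (v j).1 ≤ (v p).1) ⊆
          univ.filter (fun j => (v j).1 < (v q).1) := by
        intro j hj
        simp only [mem_filter, mem_univ, true_and] at hj ⊢
        exact lt_of_le_of_lt hj hlt
      have := Finset.card_le_card hsub
      rw [h1, h2, Finset.card_insert_of_notMem hp, hcp, hcq] at this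
      omega
    rcases lt_trichotomy ((v i).1) ((v i').1) with hlt | heq | hlt
    · exact key i i' S S' hiS hcard hiS' hcard' hv hv' hlt
    · -- equal: i' ≠ i, so i' ∈ S or condition gives strict
      by_cases hi'S : i' ∈ S
      · exact absurd heq.symm (ne_of_lt (hv.2.1 i' hi'S))
      · exact absurd heq (ne_of_lt (hv.2.2 i' (Ne.symm hii) hi'S).1)
    · exact key i' i S' S hiS' hcard' hiS hcard hv' hv hlt
  subst hii
  have : S = S' := hf ▸ hf'
  exact hne (by rw [this])

open Classical in
lemma evSet_cover {t c : ℝ} {N r : ℕ} (hr : 1 ≤ r) (hrN : r ≤ N)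
    {v : Fin N → ℝ × ℝ} (hinj : Function.Injective (fun j => (v j).1))
    (hv : v ∈ {v : Fin N → ℝ × ℝ | t < orderStat (fun j => (v j).1) r ∧
      ∀ j, orderStat (fun k => (v k).1) r ≤ (v j).1 → c < (v j).2}) :
    ∃ i S, i ∉ S ∧ S.card = r - 1 ∧ v ∈ evSet t c i S := by
  classical
  set a : Fin N → ℝ := fun j => (v j).1 with ha
  obtain ⟨i, hi⟩ : ∃ i, (univ.filter (fun j => a j < a i)).card = r - 1 :=
    rank_surj a hinj (r - 1) (by omega)
  set S := univ.filter (fun j => a j < a i) with hS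
  have hiS : i ∉ S := by simp [hS]
  have hle : univ.filter (fun j => a j ≤ a i) = insert i S := by
    ext j
    simp only [hS, mem_filter, mem_univ, true_and, Finset.mem_insert]
    constructor
    · intro hj
      rcases eq_or_ne j i with rfl | hne
      · exact Or.inl rfl
      · exact Or.inr (lt_of_le_of_ne hj (fun h => hne (hinj h)))
    · rintro (rfl | hj)
      · exact le_rfl
      · exact hj.le
  have hord : orderStat a r = a i := by
    refine orderStat_eq a r i hr ?_ (by rw [← hS, hi])
    rw [hle, Finset.card_insert_of_notMem hiS, hS, hi]
    omega
  obtain ⟨h1, h2⟩ := hv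
  rw [hord] at h1 h2
  refine ⟨i, S, hiS, hi, ⟨⟨h1, h2 i le_rfl⟩, ?_, ?_⟩⟩
  · intro j hj
    exact (Finset.mem_filter.1 hj).2
  · intro j hne hjS
    have : a i < a j := by
      rcases lt_trichotomy (a j) (a i) with h | h | h
      · exact absurd (by simpa [hS] using h) hjS
      · exact absurd (hinj h) hne
      · exact h
    exact ⟨this, h2 j this.le⟩


lemma evSet_measurable {t c : ℝ} {N : ℕ} (i : Fin N) (S : Finset (Fin N)) :
    MeasurableSet (evSet t c i S) := by
  have hev : ∀ j : Fin N, Measurable (fun v : Fin N → ℝ × ℝ => v j) := fun j =>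
    measurable_pi_apply j
  have h1 : MeasurableSet {v : Fin N → ℝ × ℝ | t < (v i).1 ∧ c < (v i).2} :=
    (measurableSet_lt measurable_const (hev i).fst).inter
      (measurableSet_lt measurable_const (hev i).snd)
  have h2 : MeasurableSet {v : Fin N → ℝ × ℝ | ∀ j ∈ S, (v j).1 < (v i).1} := by
    rw [Set.setOf_forall]
    refine MeasurableSet.iInter fun j => ?_
    by_cases hj : j ∈ S
    · simpa [hj] using measurableSet_lt (hev j).fst (hev i).fst
    · simp [hj]
  have h3 : MeasurableSet {v : Fin N → ℝ × ℝ |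
      ∀ j, j ≠ i → j ∉ S → ((v i).1 < (v j).1 ∧ c < (v j).2)} := by
    rw [Set.setOf_forall]
    refine MeasurableSet.iInter fun j => ?_
    by_cases hj : j ≠ i ∧ j ∉ S
    · have heq : {v : Fin N → ℝ × ℝ | j ≠ i → j ∉ S → ((v i).1 < (v j).1 ∧ c < (v j).2)}
          = {v : Fin N → ℝ × ℝ | (v i).1 < (v j).1} ∩ {v : Fin N → ℝ × ℝ | c < (v j).2} := by
        ext v; simp [hj.1, hj.2]
      rw [heq]
      exact ((measurableSet_lt (hev i).fst (hev j).fst).inter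
        (measurableSet_lt measurable_const (hev j).snd))
    · rcases not_and_or.1 hj with hj | hj
      · simp only [not_ne_iff.1 hj]
        simp
      · rw [not_not] at hj
        simp [hj]
  exact (h1.inter (h2.inter h3))

open Classical in
lemma card_succAbove_filter {m : ℕ} (i : Fin (m+1)) (S : Finset (Fin (m+1))) (hiS : i ∉ S) :
    (univ.filter (fun j : Fin m => i.succAbove j ∈ S)).card = S.card := by
  refine Finset.card_bij (fun j _ => i.succAbove j) ?_ ?_ ?_
  · intro j hj; exact (Finset.mem_filter.1 hj).2
  · intro a _ b _ h; exact Fin.succAbove_right_injective h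
  · intro k hk
    obtain ⟨j, hj⟩ := Fin.exists_succAbove_eq (x := k) (y := i) (fun h => hiS (h ▸ hk))
    exact ⟨j, Finset.mem_filter.2 ⟨Finset.mem_univ _, hj.symm ▸ hk⟩, hj⟩

open Classical in
lemma pi_evSet_measure {m : ℕ} (ν : Measure (ℝ × ℝ)) [IsProbabilityMeasure ν] (t c : ℝ)
    (i : Fin (m+1)) (S : Finset (Fin (m+1))) (hiS : i ∉ S) :
    (Measure.pi fun _ : Fin (m+1) => ν) (evSet t c i S)
      = ∫⁻ p in Set.Ioi t ×ˢ Set.Ioi c,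
          (ν {q : ℝ × ℝ | q.1 < p.1}) ^ S.card *
          (ν {q : ℝ × ℝ | p.1 < q.1 ∧ c < q.2}) ^ (m - S.card) ∂ν := by
  classical
  set e := MeasurableEquiv.piFinSuccAbove (fun _ : Fin (m+1) => ℝ × ℝ) i with he
  have hmp := measurePreserving_piFinSuccAbove (fun _ : Fin (m+1) => ν) i
  set B : Fin m → ℝ → Set (ℝ × ℝ) := fun j x =>
    if i.succAbove j ∈ S then {q : ℝ × ℝ | q.1 < x} else {q : ℝ × ℝ | x < q.1 ∧ c < q.2} with hB
  set s : Set ((ℝ × ℝ) × (Fin m → ℝ × ℝ)) :=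
    {q | (t < q.1.1 ∧ c < q.1.2) ∧ ∀ j, q.2 j ∈ B j q.1.1} with hs
  have hBmeas : ∀ j x, MeasurableSet (B j x) := by
    intro j x
    by_cases h : i.succAbove j ∈ S <;> simp only [hB, h, if_true, if_false]
    · exact measurableSet_lt measurable_fst measurable_const
    · exact (measurableSet_lt measurable_const measurable_fst).inter
        (measurableSet_lt measurable_const measurable_snd)
  have hsmeas : MeasurableSet s := by
    refine MeasurableSet.inter ?_ ?_
    · exact ((measurableSet_lt measurable_const (measurable_fst.comp measurable_fst)).inter
        (measurableSet_lt measurable_const (measurable_snd.comp measurable_fst)))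
    · show MeasurableSet {q : (ℝ × ℝ) × (Fin m → ℝ × ℝ) | ∀ j, q.2 j ∈ B j q.1.1}
      rw [Set.setOf_forall]
      refine MeasurableSet.iInter fun j => ?_
      by_cases h : i.succAbove j ∈ S <;> simp only [hB, h, if_true, if_false]
      · exact measurableSet_lt
          ((measurable_pi_apply j).comp measurable_snd).fst
          (measurable_fst.comp measurable_fst)
      · change MeasurableSet {q : (ℝ × ℝ) × (Fin m → ℝ × ℝ) | q.1.1 < (q.2 j).1 ∧ c < (q.2 j).2}
        rw [Set.setOf_and]
        exact MeasurableSet.inter (measurableSet_lt (measurable_fst.comp measurable_fst)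
          ((measurable_pi_apply j).comp measurable_snd).fst)
          (measurableSet_lt measurable_const
            ((measurable_pi_apply j).comp measurable_snd).snd)
  have hiff : ∀ v : Fin (m+1) → ℝ × ℝ,
      (∀ j : Fin m, v (i.succAbove j) ∈ B j (v i).1) ↔
      ((∀ j ∈ S, (v j).1 < (v i).1) ∧
        ∀ j, j ≠ i → j ∉ S → ((v i).1 < (v j).1 ∧ c < (v j).2)) := by
    intro v
    constructor
    · intro h
      constructor
      · intro j hj
        obtain ⟨j', rfl⟩ := Fin.exists_succAbove_eq (x := j) (y := i) (fun hh => hiS (hh ▸ hj))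
        have := h j'
        simpa only [hB, if_pos hj, Set.mem_setOf_eq] using this
      · intro j hne hjS
        obtain ⟨j', rfl⟩ := Fin.exists_succAbove_eq (x := j) (y := i) hne
        have := h j'
        simpa only [hB, if_neg hjS, Set.mem_setOf_eq] using this
    · rintro ⟨h1, h2⟩ j
      by_cases hj : i.succAbove j ∈ S
      · simpa only [hB, if_pos hj, Set.mem_setOf_eq] using h1 _ hj
      · simpa only [hB, if_neg hj, Set.mem_setOf_eq] using h2 _ (Fin.succAbove_ne i j) hj
  have hpre : e ⁻¹' s = evSet t c i S := by
    ext v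
    simp only [Set.mem_preimage, hs, Set.mem_setOf_eq, he,
      MeasurableEquiv.piFinSuccAbove_apply, Fin.insertNthEquiv_symm_apply, Fin.removeNth, evSet]
    rw [hiff v]
  rw [← hpre, hmp.measure_preimage hsmeas.nullMeasurableSet, Measure.prod_apply hsmeas]
  have hslice : ∀ p : ℝ × ℝ, (Measure.pi fun _ : Fin m => ν) (Prod.mk p ⁻¹' s)
      = Set.indicator (Set.Ioi t ×ˢ Set.Ioi c)
          (fun p : ℝ × ℝ => (ν {q : ℝ × ℝ | q.1 < p.1}) ^ S.card *
            (ν {q : ℝ × ℝ | p.1 < q.1 ∧ c < q.2}) ^ (m - S.card)) p := by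
    intro p
    have hpmem : p ∈ Set.Ioi t ×ˢ Set.Ioi c ↔ (t < p.1 ∧ c < p.2) := by
      simp [Set.mem_prod]
    by_cases hp : p ∈ Set.Ioi t ×ˢ Set.Ioi c
    · rw [Set.indicator_of_mem hp]
      have hset : Prod.mk p ⁻¹' s = Set.pi Set.univ (fun j => B j p.1) := by
        ext w
        simp only [Set.mem_preimage, hs, Set.mem_setOf_eq, Set.mem_pi, Set.mem_univ,
          true_implies]
        exact ⟨fun h => h.2, fun h => ⟨hpmem.1 hp, h⟩⟩
      rw [hset, Measure.pi_pi]
      rw [← Finset.prod_filter_mul_prod_filter_not univ (fun j => i.succAbove j ∈ S)]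
      have hc1 : ∀ j ∈ univ.filter (fun j : Fin m => i.succAbove j ∈ S),
          ν (B j p.1) = ν {q : ℝ × ℝ | q.1 < p.1} := by
        intro j hj
        rw [hB]
        simp only [if_pos (Finset.mem_filter.1 hj).2]
      have hc2 : ∀ j ∈ univ.filter (fun j : Fin m => ¬ i.succAbove j ∈ S),
          ν (B j p.1) = ν {q : ℝ × ℝ | p.1 < q.1 ∧ c < q.2} := by
        intro j hj
        rw [hB]
        simp only [if_neg (Finset.mem_filter.1 hj).2]
      rw [Finset.prod_congr rfl hc1, Finset.prod_congr rfl hc2, Finset.prod_const,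
        Finset.prod_const, card_succAbove_filter i S hiS]
      congr 2
      have := Finset.card_filter_add_card_filter_not
        (s := (univ : Finset (Fin m))) (p := fun j => i.succAbove j ∈ S)
      rw [card_succAbove_filter i S hiS] at this
      simp only [Finset.card_univ, Fintype.card_fin] at this
      omega
    · rw [Set.indicator_of_notMem hp]
      have hset : Prod.mk p ⁻¹' s = ∅ := by
        ext w
        simp only [Set.mem_preimage, hs, Set.mem_setOf_eq, Set.mem_empty_iff_false, iff_false]
        intro h
        exact hp (hpmem.2 h.1)
      simp [hset]
  simp_rw [hslice]
  rw [lintegral_indicator (measurableSet_Ioi.prod measurableSet_Ioi)]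


lemma map_eq_pi {Ω : Type*} [MeasurableSpace Ω] (μ : Measure Ω) [IsProbabilityMeasure μ]
    {n : ℕ} (Y : Fin n → Ω → ℝ × ℝ) (hY : ∀ i, Measurable (Y i))
    (hindep : iIndepFun Y μ)
    (ν : Measure (ℝ × ℝ)) [IsProbabilityMeasure ν]
    (hlaw : ∀ i, Measure.map (Y i) μ = ν) :
    Measure.map (fun ω i => Y i ω) μ = Measure.pi (fun _ => ν) := by
  have hT : Measurable (fun ω i => Y i ω) := measurable_pi_lambda _ hY
  refine (Measure.pi_eq fun A hA => ?_).symm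
  rw [Measure.map_apply hT (MeasurableSet.univ_pi hA)]
  have hpre : (fun ω i => Y i ω) ⁻¹' Set.pi Set.univ A = ⋂ i ∈ (univ : Finset (Fin n)), Y i ⁻¹' A i := by
    ext ω
    simp [Set.mem_pi]
  rw [hpre, hindep.measure_inter_preimage_eq_mul univ (fun i _ => hA i)]
  refine Finset.prod_congr rfl fun i _ => ?_
  rw [← Measure.map_apply (hY i) (hA i), hlaw i]


lemma final_integral {f : ℝ → ℝ → ℝ} (hf_nonneg : ∀ x y, 0 ≤ f x y)
    (hf_meas : Measurable (Function.uncurry f))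
    (F G : ℝ → ENNReal) (hF : Measurable F) (hG : Measurable G)
    (hF1 : ∀ x, F x ≤ 1) (hG1 : ∀ x, G x ≤ 1)
    (a b : ℕ) (t c : ℝ)
    (htot : ∫⁻ p : ℝ × ℝ, ENNReal.ofReal (f p.1 p.2) ∂(volume : Measure (ℝ × ℝ)) ≠ ⊤) :
    (∫⁻ p in Set.Ioi t ×ˢ Set.Ioi c,
        F p.1 ^ a * G p.1 ^ b * ENNReal.ofReal (f p.1 p.2) ∂(volume : Measure (ℝ × ℝ))).toReal
      = ∫ y in Set.Ioi c, ∫ x in Set.Ioi t,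
          (F x).toReal ^ a * (G x).toReal ^ b * f x y := by
  set g : ℝ × ℝ → ENNReal := fun p => F p.1 ^ a * G p.1 ^ b * ENNReal.ofReal (f p.1 p.2)
    with hg
  have hgmeas : Measurable g := by
    exact (((hF.comp measurable_fst).pow_const a).mul
      ((hG.comp measurable_fst).pow_const b)).mul
      (ENNReal.measurable_ofReal.comp hf_meas)
  have hgle : ∀ p, g p ≤ ENNReal.ofReal (f p.1 p.2) := by
    intro p
    calc g p ≤ 1 ^ a * 1 ^ b * ENNReal.ofReal (f p.1 p.2) := by
          refine mul_le_mul' (mul_le_mul' ?_ ?_) le_rfl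
          · exact pow_le_pow_left' (hF1 p.1) a
          · exact pow_le_pow_left' (hG1 p.1) b
      _ = ENNReal.ofReal (f p.1 p.2) := by simp
  have key : ∫⁻ p in Set.Ioi t ×ˢ Set.Ioi c, g p ∂(volume : Measure (ℝ × ℝ))
      = ∫⁻ y in Set.Ioi c, ∫⁻ x in Set.Ioi t, g (x, y) ∂volume ∂volume := by
    rw [Measure.volume_eq_prod, ← Measure.prod_restrict]
    exact lintegral_prod_symm g hgmeas.aemeasurable
  have hfin : ∫⁻ p in Set.Ioi t ×ˢ Set.Ioi c, g p ∂(volume : Measure (ℝ × ℝ)) ≠ ⊤ := by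
    refine ne_top_of_le_ne_top htot ?_
    calc ∫⁻ p in Set.Ioi t ×ˢ Set.Ioi c, g p ∂(volume : Measure (ℝ × ℝ))
        ≤ ∫⁻ p in Set.Ioi t ×ˢ Set.Ioi c, ENNReal.ofReal (f p.1 p.2)
            ∂(volume : Measure (ℝ × ℝ)) := lintegral_mono hgle
      _ ≤ _ := setLIntegral_le_lintegral _ _
  set J : ℝ → ENNReal := fun y => ∫⁻ x in Set.Ioi t, g (x, y) ∂volume with hJ
  have hJmeas : Measurable J :=
    Measurable.lintegral_prod_left (f := fun x y => g (x, y)) (by exact hgmeas.comp (measurable_fst.prodMk measurable_snd))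
  have hJfin : ∀ᵐ y ∂(volume.restrict (Set.Ioi c)), J y < ⊤ := by
    refine ae_lt_top hJmeas ?_
    rw [← key] at *
    exact hfin
  have hinner : ∀ y : ℝ, ∫ x in Set.Ioi t, (F x).toReal ^ a * (G x).toReal ^ b * f x y
      = (J y).toReal := by
    intro y
    rw [hJ]
    rw [integral_eq_lintegral_of_nonneg_ae]
    · congr 1
      refine lintegral_congr fun x => ?_
      rw [ENNReal.ofReal_mul (mul_nonneg (by positivity) (by positivity)), ENNReal.ofReal_mul (pow_nonneg ENNReal.toReal_nonneg a),
        ENNReal.ofReal_pow ENNReal.toReal_nonneg, ENNReal.ofReal_pow ENNReal.toReal_nonneg,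
        ENNReal.ofReal_toReal (by exact ne_top_of_le_ne_top ENNReal.one_ne_top (hF1 x)),
        ENNReal.ofReal_toReal (by exact ne_top_of_le_ne_top ENNReal.one_ne_top (hG1 x))]
    · exact Filter.Eventually.of_forall fun x => mul_nonneg (mul_nonneg (pow_nonneg ENNReal.toReal_nonneg a) (pow_nonneg ENNReal.toReal_nonneg b)) (hf_nonneg x y)
    · refine Measurable.aestronglyMeasurable ?_
      exact ((hF.ennreal_toReal.pow_const a).mul (hG.ennreal_toReal.pow_const b)).mul
        (hf_meas.comp (measurable_id.prodMk measurable_const))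
  calc (∫⁻ p in Set.Ioi t ×ˢ Set.Ioi c, g p ∂(volume : Measure (ℝ × ℝ))).toReal
      = (∫⁻ y in Set.Ioi c, J y ∂volume).toReal := by rw [key]
    _ = ∫ y in Set.Ioi c, (J y).toReal ∂volume :=
        (integral_toReal hJmeas.aemeasurable hJfin).symm
    _ = ∫ y in Set.Ioi c, ∫ x in Set.Ioi t,
          (F x).toReal ^ a * (G x).toReal ^ b * f x y ∂volume ∂volume := by
        refine integral_congr_ae (Filter.Eventually.of_forall fun y => ?_)
        exact (hinner y).symm


/-- with time-dependent powers W_i(t) = W_i·φ(t), where φ : [0,∞) → (0,1] is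
continuous, decreasing, φ(0) = 1 and φ(t) → 0 as t → ∞, for all t ≥ 0 and s ≥ 0:
Q(t,s) = P{X_{r:n} > t, W_{[r:n]}(t) > s, ..., W_{[n:n]}(t) > s}
       = P{X_{r:n} > t, W_{[r:n]} > s/φ(t), ..., W_{[n:n]} > s/φ(t)}
       = n·C(n-1,r-1)·∫_{s/φ(t)}^∞ ∫_t^∞ F_X(x)^{r-1}·[F̄_{X,W}(x,s/φ(t))]^{n-r}·f(x,y) dx dy.
The event {X_{r:n} > t, W_{[r:n]}(t) > s, ...} is the event that X_{r:n} > t and every index i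
with X_i ≥ X_{r:n} satisfies W_i·φ(t) > s. -/
theorem statement7
    {Ω : Type*} [MeasurableSpace Ω] (μ : Measure Ω) [IsProbabilityMeasure μ]
    (n r : ℕ) (hr : 1 ≤ r) (hrn : r ≤ n)
    (X W : Fin n → Ω → ℝ)
    (hXmeas : ∀ i, Measurable (X i)) (hWmeas : ∀ i, Measurable (W i))
    (f : ℝ → ℝ → ℝ) (hf_nonneg : ∀ x y, 0 ≤ f x y)
    (hf_meas : Measurable (Function.uncurry f))
    (hindep : iIndepFun (fun i ω => (X i ω, W i ω)) μ)
    (hlaw : ∀ i, Measure.map (fun ω => (X i ω, W i ω)) μ =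
      (volume : Measure (ℝ × ℝ)).withDensity (fun p => ENNReal.ofReal (f p.1 p.2)))
    (hX_nonneg : ∀ i, ∀ᵐ ω ∂μ, 0 ≤ X i ω)
    (φ : ℝ → ℝ) (hφ_cont : ContinuousOn φ (Set.Ici 0))
    (hφ_anti : AntitoneOn φ (Set.Ici 0))
    (hφ_mem : ∀ u ∈ Set.Ici (0 : ℝ), φ u ∈ Set.Ioc (0 : ℝ) 1)
    (hφ0 : φ 0 = 1)
    (hφ_lim : Filter.Tendsto φ Filter.atTop (nhds 0))
    (t s : ℝ) (ht : 0 ≤ t) (hs : 0 ≤ s) :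
    μ {ω | t < orderStat (fun i => X i ω) r ∧
        ∀ i, orderStat (fun j => X j ω) r ≤ X i ω → s < W i ω * φ t}
      = μ {ω | t < orderStat (fun i => X i ω) r ∧
        ∀ i, orderStat (fun j => X j ω) r ≤ X i ω → s / φ t < W i ω}
    ∧ (μ {ω | t < orderStat (fun i => X i ω) r ∧
        ∀ i, orderStat (fun j => X j ω) r ≤ X i ω → s < W i ω * φ t}).toReal
      = (n : ℝ) * ((n - 1).choose (r - 1) : ℝ) *
        ∫ y in Set.Ioi (s / φ t), ∫ x in Set.Ioi t,
          (μ {ω | X ⟨0, by omega⟩ ω < x}).toReal ^ (r - 1) *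
          (μ {ω | x < X ⟨0, by omega⟩ ω ∧ s / φ t < W ⟨0, by omega⟩ ω}).toReal ^ (n - r) *
          f x y := by
  classical
  obtain ⟨m, rfl⟩ : ∃ m, n = m + 1 := ⟨n - 1, by omega⟩
  have hφt : 0 < φ t := (hφ_mem t ht).1
  set c := s / φ t with hc
  have hsets : {ω | t < orderStat (fun i => X i ω) r ∧
        ∀ i, orderStat (fun j => X j ω) r ≤ X i ω → s < W i ω * φ t}
      = {ω | t < orderStat (fun i => X i ω) r ∧
        ∀ i, orderStat (fun j => X j ω) r ≤ X i ω → c < W i ω} := by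
    ext ω
    exact and_congr_right fun _ => forall_congr' fun i => imp_congr_right fun _ =>
      (div_lt_iff₀ hφt).symm
  refine ⟨by rw [hsets], ?_⟩
  rw [hsets]
  set ν : Measure (ℝ × ℝ) := (volume : Measure (ℝ × ℝ)).withDensity
    (fun p => ENNReal.ofReal (f p.1 p.2)) with hν
  have hpair : ∀ i : Fin (m+1), Measurable (fun ω => (X i ω, W i ω)) :=
    fun i => (hXmeas i).prodMk (hWmeas i)
  have hνprob : IsProbabilityMeasure ν := by
    rw [← hlaw ⟨0, by omega⟩]
    exact Measure.isProbabilityMeasure_map ((hpair _).aemeasurable)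
  set T : Ω → (Fin (m+1) → ℝ × ℝ) := fun ω i => (X i ω, W i ω) with hT
  have hTmeas : Measurable T := measurable_pi_lambda _ hpair
  have hmap : Measure.map T μ = Measure.pi (fun _ => ν) :=
    map_eq_pi μ _ hpair hindep ν hlaw
  set F : ℝ → ENNReal := fun x => ν {q : ℝ × ℝ | q.1 < x} with hF
  set G : ℝ → ENNReal := fun x => ν {q : ℝ × ℝ | x < q.1 ∧ c < q.2} with hG
  set E : Set (Fin (m+1) → ℝ × ℝ) := {v | t < orderStat (fun j => (v j).1) r ∧
    ∀ j, orderStat (fun k => (v k).1) r ≤ (v j).1 → c < (v j).2} with hE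
  have hpreE : {ω | t < orderStat (fun i => X i ω) r ∧
      ∀ i, orderStat (fun j => X j ω) r ≤ X i ω → c < W i ω} = T ⁻¹' E := rfl
  -- the null set of non-injective configurations
  set UN : Set (Fin (m+1) → ℝ × ℝ) := ⋃ (i : Fin (m+1)) (j : Fin (m+1)) (_ : i ≠ j),
    {v : Fin (m+1) → ℝ × ℝ | (v i).1 = (v j).1} with hUN
  have hXeq0 : ∀ i j : Fin (m+1), i ≠ j → μ {ω | X i ω = X j ω} = 0 := by
    intro i j hij
    have hfst : ∀ k : Fin (m+1), Measure.map (X k) μ = Measure.map Prod.fst ν := by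
      intro k
      rw [← hlaw k, Measure.map_map measurable_fst (hpair k)]
      rfl
    have hsing : ∀ x : ℝ, (Measure.map (X j) μ) {x} = 0 := by
      intro x
      rw [hfst j, Measure.map_apply measurable_fst (measurableSet_singleton x)]
      have hpre2 : (Prod.fst ⁻¹' {x} : Set (ℝ × ℝ)) = {x} ×ˢ Set.univ := by
        ext p
        exact ⟨fun h => ⟨h, trivial⟩, fun h => h.1⟩
      rw [hpre2, hν]
      refine withDensity_absolutelyContinuous volume _ ?_
      rw [Measure.volume_eq_prod, Measure.prod_prod]
      simp
    have hind : IndepFun (X i) (X j) μ := by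
      have h1 := hindep.indepFun hij
      exact h1.comp measurable_fst measurable_fst
    have hmap2 := (indepFun_iff_map_prod_eq_prod_map_map (hXmeas i).aemeasurable
      (hXmeas j).aemeasurable).1 hind
    have hdiag : MeasurableSet {p : ℝ × ℝ | p.1 = p.2} :=
      measurableSet_eq_fun measurable_fst measurable_snd
    have heq : {ω | X i ω = X j ω} =
        (fun ω => (X i ω, X j ω)) ⁻¹' {p : ℝ × ℝ | p.1 = p.2} := rfl
    rw [heq, ← Measure.map_apply ((hXmeas i).prodMk (hXmeas j)) hdiag, hmap2,
      Measure.prod_apply hdiag]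
    have hslice : ∀ x : ℝ, (Measure.map (X j) μ) (Prod.mk x ⁻¹' {p : ℝ × ℝ | p.1 = p.2}) = 0 := by
      intro x
      have : (Prod.mk x ⁻¹' {p : ℝ × ℝ | p.1 = p.2}) = {x} := by
        ext y
        simp [eq_comm]
      rw [this]
      exact hsing x
    simp [hslice, hsing]
  have hUN0 : μ (T ⁻¹' UN) = 0 := by
    have hpreUN : T ⁻¹' UN = ⋃ (i : Fin (m+1)) (j : Fin (m+1)) (_ : i ≠ j),
        {ω | X i ω = X j ω} := by
      rw [hUN]
      simp only [Set.preimage_iUnion]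
      rfl
    rw [hpreUN]
    exact measure_iUnion_null fun i => measure_iUnion_null fun j =>
      measure_iUnion_null fun hij => hXeq0 i j hij
  -- the decomposition
  set U : Set (Fin (m+1) → ℝ × ℝ) := ⋃ i ∈ (univ : Finset (Fin (m+1))),
    ⋃ S ∈ Finset.powersetCard (r-1) (univ.erase i), evSet t c i S with hU
  have hUmeas : MeasurableSet U :=
    Finset.measurableSet_biUnion _ fun i _ =>
      Finset.measurableSet_biUnion _ fun S _ => evSet_measurable i S
  have hUsub : U ⊆ E := by
    intro v hv
    simp only [hU, Set.mem_iUnion, exists_prop] at hv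
    obtain ⟨i, -, S, hS, hvS⟩ := hv
    obtain ⟨hsub, hcard⟩ := Finset.mem_powersetCard.1 hS
    have hiS : i ∉ S := fun h => (Finset.mem_erase.1 (hsub h)).1 rfl
    exact evSet_subset hr hiS hcard hvS
  have hEsub : E ⊆ U ∪ UN := by
    intro v hv
    by_cases hinj : Function.Injective (fun j : Fin (m+1) => (v j).1)
    · left
      obtain ⟨i, S, hiS, hcard, hvmem⟩ := evSet_cover hr (by omega) hinj hv
      have hSmem : S ∈ Finset.powersetCard (r-1) (univ.erase i) :=
        Finset.mem_powersetCard.2 ⟨fun j hj =>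
          Finset.mem_erase.2 ⟨fun h => hiS (h ▸ hj), Finset.mem_univ j⟩, hcard⟩
      simp only [hU, Set.mem_iUnion, exists_prop]
      exact ⟨i, Finset.mem_univ i, S, hSmem, hvmem⟩
    · right
      rw [Function.not_injective_iff] at hinj
      obtain ⟨a, b, hab, hne⟩ := hinj
      exact Set.mem_iUnion.2 ⟨a, Set.mem_iUnion.2 ⟨b, Set.mem_iUnion.2 ⟨hne, hab⟩⟩⟩
  have hμE : μ (T ⁻¹' E) = μ (T ⁻¹' U) := by
    refine le_antisymm ?_ (measure_mono (Set.preimage_mono hUsub))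
    calc μ (T ⁻¹' E) ≤ μ (T ⁻¹' U ∪ T ⁻¹' UN) := by
          refine measure_mono ?_
          rw [← Set.preimage_union]
          exact Set.preimage_mono hEsub
      _ ≤ μ (T ⁻¹' U) + μ (T ⁻¹' UN) := measure_union_le _ _
      _ = μ (T ⁻¹' U) := by rw [hUN0, add_zero]
  -- the sum computation
  set I : ENNReal := ∫⁻ p in Set.Ioi t ×ˢ Set.Ioi c, F p.1 ^ (r-1) * G p.1 ^ (m+1-r) ∂ν with hI
  have hI_each : ∀ (i : Fin (m+1)) (S : Finset (Fin (m+1))),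
      S ∈ Finset.powersetCard (r-1) (univ.erase i) →
      (Measure.pi fun _ : Fin (m+1) => ν) (evSet t c i S) = I := by
    intro i S hS
    obtain ⟨hsub, hcard⟩ := Finset.mem_powersetCard.1 hS
    have hiS : i ∉ S := fun h => (Finset.mem_erase.1 (hsub h)).1 rfl
    rw [pi_evSet_measure ν t c i S hiS, hcard, hI]
    have : m - (r - 1) = m + 1 - r := by omega
    rw [this]
  have hsum : μ (T ⁻¹' U) = (((m+1) * m.choose (r-1) : ℕ) : ENNReal) * I := by
    have hconv : μ (T ⁻¹' U) = (Measure.pi fun _ : Fin (m+1) => ν) U := by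
      rw [← hmap, Measure.map_apply hTmeas hUmeas]
    have houter : (↑(univ : Finset (Fin (m+1))) : Set (Fin (m+1))).PairwiseDisjoint
        (fun i => ⋃ S ∈ Finset.powersetCard (r-1) (univ.erase i), evSet t c i S) := by
      intro i _ i' _ hne
      refine Set.disjoint_left.2 fun v hv hv' => ?_
      simp only [Set.mem_iUnion, exists_prop] at hv hv'
      obtain ⟨S, hS, hvS⟩ := hv
      obtain ⟨S', hS', hvS'⟩ := hv'
      obtain ⟨hsub, hcard⟩ := Finset.mem_powersetCard.1 hS
      obtain ⟨hsub', hcard'⟩ := Finset.mem_powersetCard.1 hS'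
      have hiS : i ∉ S := fun h => (Finset.mem_erase.1 (hsub h)).1 rfl
      have hiS' : i' ∉ S' := fun h => (Finset.mem_erase.1 (hsub' h)).1 rfl
      exact Set.disjoint_left.1
        (evSet_disjoint hr hiS hcard hiS' hcard'
          (fun h => hne (congrArg Prod.fst h))) hvS hvS'
    have hinnerdis : ∀ i : Fin (m+1),
        (↑(Finset.powersetCard (r-1) (univ.erase i)) : Set (Finset (Fin (m+1)))).PairwiseDisjoint
          (evSet t c i) := by
      intro i S hS S' hS' hne
      obtain ⟨hsub, hcard⟩ := Finset.mem_powersetCard.1 (Finset.mem_coe.1 hS)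
      obtain ⟨hsub', hcard'⟩ := Finset.mem_powersetCard.1 (Finset.mem_coe.1 hS')
      have hiS : i ∉ S := fun h => (Finset.mem_erase.1 (hsub h)).1 rfl
      have hiS' : i ∉ S' := fun h => (Finset.mem_erase.1 (hsub' h)).1 rfl
      exact evSet_disjoint hr hiS hcard hiS' hcard' (fun h => hne (congrArg Prod.snd h))
    rw [hconv, hU, measure_biUnion_finset houter (fun i _ =>
      Finset.measurableSet_biUnion _ fun S _ => evSet_measurable i S)]
    have hstep : ∀ i ∈ (univ : Finset (Fin (m+1))),
        (Measure.pi fun _ : Fin (m+1) => ν)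
            (⋃ S ∈ Finset.powersetCard (r-1) (univ.erase i), evSet t c i S)
          = (m.choose (r-1) : ℕ) • I := by
      intro i _
      rw [measure_biUnion_finset (hinnerdis i) (fun S _ => evSet_measurable i S)]
      rw [Finset.sum_congr rfl (fun S hS => hI_each i S hS), Finset.sum_const,
        Finset.card_powersetCard, Finset.card_erase_of_mem (Finset.mem_univ i),
        Finset.card_univ, Fintype.card_fin, Nat.add_sub_cancel]
    rw [Finset.sum_congr rfl hstep, Finset.sum_const, Finset.card_univ, Fintype.card_fin,
      smul_smul, nsmul_eq_mul]
  -- measurability and bounds for F, G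
  have hFmeas : Measurable F := by
    refine Monotone.measurable fun x x' hxx' => ?_
    exact measure_mono fun q hq => lt_of_lt_of_le hq hxx'
  have hGmeas : Measurable G := by
    refine Antitone.measurable fun x x' hxx' => ?_
    exact measure_mono fun q hq => ⟨lt_of_le_of_lt hxx' hq.1, hq.2⟩
  have hF1 : ∀ x, F x ≤ 1 := fun x => prob_le_one
  have hG1 : ∀ x, G x ≤ 1 := fun x => prob_le_one
  have hdensmeas : Measurable (fun p : ℝ × ℝ => ENNReal.ofReal (f p.1 p.2)) :=
    ENNReal.measurable_ofReal.comp hf_meas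
  have htot : (∫⁻ p : ℝ × ℝ, ENNReal.ofReal (f p.1 p.2) ∂(volume : Measure (ℝ × ℝ))) = 1 := by
    have h1 : ν Set.univ = 1 := measure_univ
    rwa [hν, withDensity_apply _ MeasurableSet.univ, Measure.restrict_univ] at h1
  have hIvol : I = ∫⁻ p in Set.Ioi t ×ˢ Set.Ioi c,
      F p.1 ^ (r-1) * G p.1 ^ (m+1-r) * ENNReal.ofReal (f p.1 p.2)
        ∂(volume : Measure (ℝ × ℝ)) := by
    rw [hI, hν, restrict_withDensity (measurableSet_Ioi.prod measurableSet_Ioi),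
      lintegral_withDensity_eq_lintegral_mul (volume.restrict (Set.Ioi t ×ˢ Set.Ioi c))
        hdensmeas (g := fun p : ℝ × ℝ => F p.1 ^ (r - 1) * G p.1 ^ (m + 1 - r))
        (((hFmeas.comp measurable_fst).pow_const _).mul
          ((hGmeas.comp measurable_fst).pow_const _))]
    exact lintegral_congr fun p => (mul_comm _ _)
  have hfinal : I.toReal = ∫ y in Set.Ioi c, ∫ x in Set.Ioi t,
      (F x).toReal ^ (r-1) * (G x).toReal ^ (m+1-r) * f x y := by
    rw [hIvol]
    exact final_integral hf_nonneg hf_meas F G hFmeas hGmeas hF1 hG1 (r-1) (m+1-r) t c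
      (by rw [htot]; exact ENNReal.one_ne_top)
  have hIne : I ≠ ⊤ := by
    refine ne_top_of_le_ne_top (measure_ne_top ν (Set.Ioi t ×ˢ Set.Ioi c)) ?_
    calc I ≤ ∫⁻ _ in Set.Ioi t ×ˢ Set.Ioi c, 1 ∂ν := by
          refine lintegral_mono fun p => ?_
          exact mul_le_one' (pow_le_one' (hF1 _) _) (pow_le_one' (hG1 _) _)
      _ = ν (Set.Ioi t ×ˢ Set.Ioi c) := setLIntegral_one _
  have hFid : ∀ (i0 : Fin (m+1)) (x : ℝ), μ {ω | X i0 ω < x} = F x := by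
    intro i0 x
    have heq : {ω | X i0 ω < x} = (fun ω => (X i0 ω, W i0 ω)) ⁻¹' {q : ℝ × ℝ | q.1 < x} := rfl
    rw [heq, ← Measure.map_apply (hpair i0) (measurableSet_lt measurable_fst measurable_const),
      hlaw i0]
  have hGid : ∀ (i0 : Fin (m+1)) (x : ℝ), μ {ω | x < X i0 ω ∧ c < W i0 ω} = G x := by
    intro i0 x
    have hmG : MeasurableSet {q : ℝ × ℝ | x < q.1 ∧ c < q.2} := by
      rw [Set.setOf_and]
      exact (measurableSet_lt measurable_const measurable_fst).inter
        (measurableSet_lt measurable_const measurable_snd)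
    have heq : {ω | x < X i0 ω ∧ c < W i0 ω}
        = (fun ω => (X i0 ω, W i0 ω)) ⁻¹' {q : ℝ × ℝ | x < q.1 ∧ c < q.2} := rfl
    rw [heq, ← Measure.map_apply (hpair i0) hmG, hlaw i0]
  rw [hpreE, hμE, hsum, ENNReal.toReal_mul, ENNReal.toReal_natCast]
  simp only [hFid, hGid]
  rw [← hfinal]
  have : m + 1 - 1 = m := by omega
  rw [this]
  push_cast
  ring
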